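/- Let ρ : ℤ → GL(W) be a homomorphism with M = ρ(1) ∈ GL(W), W a finite-dimensional vector space over a local field, and let c : ℤ × S → GL(W) be a cocycle over a measure-preserving ℤ-action on (S, μ) taking values in a compact subgroup of GL(W) commuting with M. Set u(m, x) = ρ(m)c(m, x). Then for almost every x and every nonzero w ∈ W, the Lyapunov exponent lim_{m→∞} (1/m) log‖u(m,x)w‖ exists and equals log|λ| for some eigenvalue λ of M; precisely, the characteristic (Lyapunov) subspaces of the cocycle u are exactly the subspaces W_d(M) = ⊕_{log|λ| = d} W_λ(M), with characteristic exponents the numbers d = log|λ|, λ ranging over eigenvalues of M. -/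

import Mathlib

open MeasureTheory Filter

section Aux
-- lemma 1: log m / m -> 0
lemma L1 : Tendsto (fun m : ℕ => Real.log m / m) atTop (nhds 0) := by
  have h := Real.tendsto_pow_log_div_mul_add_atTop 1 0 1 one_ne_zero
  simp only [pow_one, one_mul, add_zero] at h
  exact h.comp tendsto_natCast_atTop_atTop

-- inverse of nat cast tendsto 0
lemma Linv : Tendsto (fun m : ℕ => ((m : ℝ))⁻¹) atTop (nhds 0) :=
  tendsto_inv_atTop_zero.comp tendsto_natCast_atTop_atTop

-- bounded (convergent) over m -> 0
lemma Ldiv {c : ℕ → ℝ} {L : ℝ} (h : Tendsto c atTop (nhds L)) :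
    Tendsto (fun m : ℕ => c m / m) atTop (nhds 0) := by
  have := h.mul Linv
  simpa [div_eq_mul_inv] using this

-- choose ratio base case
lemma Lchoose_succ (j : ℕ) :
    Tendsto (fun m : ℕ => (m.choose j : ℝ) / (m.choose (j+1))) atTop (nhds 0) := by
  have hden : Tendsto (fun m : ℕ => (m : ℝ) - j) atTop atTop :=
    tendsto_atTop_add_const_right _ _ tendsto_natCast_atTop_atTop
  have h0 : Tendsto (fun m : ℕ => ((j : ℝ) + 1) / ((m : ℝ) - j)) atTop (nhds 0) :=
    Tendsto.div_atTop tendsto_const_nhds hden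
  refine h0.congr' ?_
  filter_upwards [eventually_ge_atTop (j + 1)] with m hm
  have hmj : j ≤ m := le_trans (Nat.le_succ j) hm
  have key : (m.choose (j+1) : ℝ) * (j + 1) = (m.choose j : ℝ) * ((m : ℝ) - j) := by
    have := Nat.choose_succ_right_eq m j
    have hcast : ((m - j : ℕ) : ℝ) = (m : ℝ) - j := by
      rw [Nat.cast_sub hmj]
    rw [← hcast]
    exact_mod_cast congrArg (Nat.cast (R := ℝ)) this
  have hpos : (0 : ℝ) < (m : ℝ) - j := by
    have : (j : ℝ) < m := by exact_mod_cast lt_of_lt_of_le (Nat.lt_succ_self j) hm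
    linarith
  have hchoose : (0 : ℝ) < (m.choose (j+1) : ℝ) := by
    exact_mod_cast Nat.choose_pos hm
  field_simp
  nlinarith [key]

-- choose ratio general
lemma Lchoose {j r : ℕ} (h : j < r) :
    Tendsto (fun m : ℕ => (m.choose j : ℝ) / (m.choose r)) atTop (nhds 0) := by
  induction r with
  | zero => omega
  | succ r ih =>
    rcases Nat.lt_succ_iff_lt_or_eq.mp h with h' | rfl
    · have h1 := ih h'
      have h2 := Lchoose_succ r
      have := h1.mul h2
      rw [mul_zero] at this
      refine this.congr' ?_
      filter_upwards [eventually_ge_atTop r] with m hm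
      have hr : (m.choose r : ℝ) ≠ 0 := by
        exact_mod_cast (Nat.choose_pos hm).ne'
      field_simp
      -- closed by field_simp
    · exact Lchoose_succ j

lemma Lcore {V : Type*} [NormedAddCommGroup V] [NormedSpace ℂ V]
    (f : Module.End ℂ V) (lam : ℂ) (hlam : lam ≠ 0) (w : V) (hw : w ≠ 0)
    (k : ℕ) (hk : ((f - lam • (1 : Module.End ℂ V)) ^ k) w = 0) :
    Tendsto (fun m : ℕ => Real.log ‖(f ^ m) w‖ / m) atTop
      (nhds (Real.log (‖lam‖))) := by
  classical
  set N : Module.End ℂ V := f - lam • 1 with hN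
  have hNk' : ∀ j, k ≤ j → (N ^ j) w = 0 := by
    intro j hj
    rw [← Nat.sub_add_cancel hj, pow_add, Module.End.mul_apply, hk, map_zero]
  set P : ℕ → Prop := fun j => (N ^ j) w ≠ 0 with hP
  set r : ℕ := Nat.findGreatest P k with hrdef
  have hP0 : P 0 := by simpa [hP] using hw
  have hr : (N ^ r) w ≠ 0 := Nat.findGreatest_spec (Nat.zero_le k) hP0
  have hrk : r ≤ k := Nat.findGreatest_le k
  have hgt : ∀ j, r < j → (N ^ j) w = 0 := by
    intro j hj
    by_cases hjk : j ≤ k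
    · by_contra hne
      exact absurd (Nat.le_findGreatest hjk hne) (not_le.mpr hj)
    · exact hNk' j (le_of_not_ge hjk)
  set v : ℕ → V := fun i => (N ^ i) w with hv
  have hcomm : Commute N (lam • (1 : Module.End ℂ V)) := (Commute.one_right N).smul_right lam
  have hf : f = N + lam • 1 := by simp [hN]
  have expand : ∀ m : ℕ, (f ^ m) w
      = ∑ i ∈ Finset.range (m+1), ((m.choose i : ℂ) * lam ^ (m - i)) • v i := by
    intro m
    conv_lhs => rw [hf, hcomm.add_pow]
    rw [LinearMap.sum_apply]
    refine Finset.sum_congr rfl fun i hi => ?_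
    have h1 : (lam • (1 : Module.End ℂ V)) ^ (m - i) = lam ^ (m - i) • 1 := by
      rw [smul_pow, one_pow]
    rw [h1]
    simp only [Module.End.mul_apply, Module.End.natCast_apply, LinearMap.smul_apply,
      Module.End.one_apply, _root_.map_smul, map_nsmul, hv]
    rw [mul_comm, mul_smul, Nat.cast_smul_eq_nsmul ℂ]
    exact smul_comm _ _ _
  have expand' : ∀ m : ℕ, r ≤ m → (f ^ m) w
      = ∑ i ∈ Finset.range (r+1), ((m.choose i : ℂ) * lam ^ (m - i)) • v i := by
    intro m hm
    rw [expand m]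
    symm
    apply Finset.sum_subset
    · intro i hi
      simp only [Finset.mem_range] at hi ⊢
      omega
    · intro i hi1 hi2
      simp only [Finset.mem_range] at hi1 hi2
      have : v i = 0 := hgt i (by omega)
      simp [this]
  set eps : ℕ → V := fun m =>
    ∑ i ∈ Finset.range r, (((m.choose i : ℂ) / (m.choose r)) * lam ^ (r - i)) • v i with heps
  have hepslim : Tendsto eps atTop (nhds 0) := by
    have : Tendsto (fun m : ℕ => ∑ i ∈ Finset.range r,
        (((m.choose i : ℂ) / (m.choose r)) * lam ^ (r - i)) • v i) atTop
        (nhds (∑ i ∈ Finset.range r, (0 : V))) := by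
      refine tendsto_finset_sum _ fun i hi => ?_
      simp only [Finset.mem_range] at hi
      have h1 : Tendsto (fun m : ℕ => ((m.choose i : ℂ) / (m.choose r))) atTop (nhds 0) := by
        have h2 := (Complex.continuous_ofReal.tendsto 0).comp (Lchoose hi)
        have h2' := h2
        rw [Complex.ofReal_zero] at h2'
        refine h2'.congr fun m => ?_
        simp only [Function.comp_apply]
        push_cast
        ring
      have h3 : Tendsto (fun m : ℕ => ((m.choose i : ℂ) / (m.choose r)) * lam ^ (r - i))
          atTop (nhds 0) := by
        simpa using h1.mul_const (lam ^ (r - i))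
      simpa using h3.smul_const (v i)
    simpa using this
  have hfact : ∀ m : ℕ, r ≤ m →
      (f ^ m) w = ((m.choose r : ℂ) * lam ^ (m - r)) • (v r + eps m) := by
    intro m hm
    rw [expand' m hm, smul_add, heps, Finset.smul_sum, Finset.sum_range_succ, add_comm]
    congr 1
    refine Finset.sum_congr rfl fun i hi => ?_
    simp only [Finset.mem_range] at hi
    rw [smul_smul]
    congr 1
    have hcr : (m.choose r : ℂ) ≠ 0 := by
      exact_mod_cast (Nat.choose_pos hm).ne'
    have hpow : lam ^ (m - i) = lam ^ (m - r) * lam ^ (r - i) := by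
      rw [← pow_add]
      congr 1
      omega
    field_simp
    rw [hpow]
    ring
  have hvr : ‖v r‖ ≠ 0 := by
    rw [norm_ne_zero_iff]
    exact hr
  have hvr0 : (0:ℝ) < ‖v r‖ := lt_of_le_of_ne (norm_nonneg _) (Ne.symm hvr)
  have hnorm : Tendsto (fun m : ℕ => ‖v r + eps m‖) atTop (nhds ‖v r‖) := by
    have h0 : Tendsto (fun m : ℕ => v r + eps m) atTop (nhds (v r + 0)) :=
      tendsto_const_nhds.add hepslim
    rw [add_zero] at h0
    exact (continuous_norm.tendsto _).comp h0
  have hlog3 : Tendsto (fun m : ℕ => Real.log ‖v r + eps m‖) atTop (nhds (Real.log ‖v r‖)) :=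
    ((Real.continuousAt_log hvr).tendsto).comp hnorm
  have t1 : Tendsto (fun m : ℕ => Real.log (m.choose r) / m) atTop (nhds 0) := by
    have hup : Tendsto (fun m : ℕ => (r:ℝ) * (Real.log m / m)) atTop (nhds 0) := by
      simpa using L1.const_mul (r:ℝ)
    refine tendsto_of_tendsto_of_tendsto_of_le_of_le' tendsto_const_nhds hup ?_ ?_
    · filter_upwards [eventually_ge_atTop r] with m hmr
      have h1 : (1:ℝ) ≤ (m.choose r : ℝ) := by exact_mod_cast Nat.choose_pos hmr
      exact div_nonneg (Real.log_nonneg h1) (Nat.cast_nonneg m)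
    · filter_upwards [eventually_ge_atTop (max r 1)] with m hm
      have hm1 : 1 ≤ m := le_trans (le_max_right r 1) hm
      have hmr : r ≤ m := le_trans (le_max_left r 1) hm
      have hlogle : Real.log (m.choose r) ≤ (r:ℝ) * Real.log m := by
        calc Real.log (m.choose r) ≤ Real.log ((m:ℝ) ^ r) := by
              apply Real.log_le_log (by exact_mod_cast Nat.choose_pos hmr)
              exact_mod_cast Nat.choose_le_pow m r
          _ = (r:ℝ) * Real.log m := by rw [Real.log_pow]
      have hmpos : (0:ℝ) < m := by exact_mod_cast hm1
      rw [mul_div_assoc']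
      exact div_le_div_of_nonneg_right hlogle hmpos.le
  have t2 : Tendsto (fun m : ℕ => ((m:ℝ) - r)/m * Real.log (‖lam‖)) atTop
      (nhds (Real.log (‖lam‖))) := by
    have h12 : Tendsto (fun m : ℕ => 1 - (r:ℝ)/m) atTop (nhds 1) := by
      have := tendsto_const_nhds (x := (1:ℝ)) (f := atTop (α := ℕ)) |>.sub
        (Ldiv (tendsto_const_nhds (x := (r:ℝ))))
      simpa using this
    have h13 : Tendsto (fun m : ℕ => (1 - (r:ℝ)/m) * Real.log (‖lam‖)) atTop
        (nhds (Real.log (‖lam‖))) := by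
      simpa using h12.mul_const (Real.log (‖lam‖))
    refine h13.congr' ?_
    filter_upwards [eventually_ge_atTop 1] with m hm1
    have hm0 : (m:ℝ) ≠ 0 := by
      have : (0:ℝ) < m := by exact_mod_cast hm1
      exact this.ne'
    rw [sub_div, div_self hm0]
  have t3 : Tendsto (fun m : ℕ => Real.log ‖v r + eps m‖ / m) atTop (nhds 0) := Ldiv hlog3
  have total : Tendsto (fun m : ℕ => Real.log (m.choose r) / m
      + ((m:ℝ) - r)/m * Real.log (‖lam‖) + Real.log ‖v r + eps m‖ / m) atTop
      (nhds (Real.log (‖lam‖))) := by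
    have := (t1.add t2).add t3
    simpa using this
  refine total.congr' ?_
  have hpos : ∀ᶠ m : ℕ in atTop, 0 < ‖v r + eps m‖ :=
    hnorm.eventually (eventually_gt_nhds hvr0)
  filter_upwards [eventually_ge_atTop r, eventually_ge_atTop 1, hpos] with m hmr hm1 hposm
  rw [hfact m hmr, norm_smul]
  have habs : ‖(m.choose r : ℂ) * lam ^ (m - r)‖
      = (m.choose r : ℝ) * (‖lam‖) ^ (m - r) := by
    rw [norm_mul, norm_pow]
    simp [Complex.norm_natCast]
  rw [habs]
  have h1 : (0:ℝ) < (m.choose r : ℝ) := by exact_mod_cast Nat.choose_pos hmr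
  have h2 : (0:ℝ) < ‖lam‖ ^ (m - r) := pow_pos (norm_pos_iff.mpr hlam) _
  rw [Real.log_mul (by positivity) (ne_of_gt hposm), Real.log_mul (ne_of_gt h1) (ne_of_gt h2),
      Real.log_pow]
  have hcast : ((m - r : ℕ) : ℝ) = (m:ℝ) - r := by rw [Nat.cast_sub hmr]
  rw [hcast]
  ring

lemma Lsup {ι : Type*} (s : Finset ι) (hs : s.Nonempty) (f : ι → ℕ → ℝ) (L : ι → ℝ)
    (h : ∀ i ∈ s, Tendsto (f i) atTop (nhds (L i))) :
    Tendsto (fun m => s.sup' hs (fun i => f i m)) atTop (nhds (s.sup' hs L)) := by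
  revert h
  induction hs using Finset.Nonempty.cons_induction with
  | singleton i =>
    intro h
    simp only [Finset.sup'_singleton]
    exact h i (Finset.mem_singleton_self i)
  | cons i s his hs' ih =>
    intro h
    simp only [Finset.sup'_cons hs']
    exact (h i (by simp)).max (ih (fun j hj => h j (Finset.mem_cons_of_mem hj)))

lemma Lcomp {a b : ℕ → ℝ} {K L : ℝ} (hK : 1 ≤ K) (hb : ∀ m, 0 < b m)
    (hlow : ∀ m, b m / K ≤ a m) (hup : ∀ m, a m ≤ K * b m)
    (h : Tendsto (fun m : ℕ => Real.log (b m) / m) atTop (nhds L)) :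
    Tendsto (fun m : ℕ => Real.log (a m) / m) atTop (nhds L) := by
  have hK0 : (0:ℝ) < K := lt_of_lt_of_le one_pos hK
  have ha : ∀ m, 0 < a m := fun m => lt_of_lt_of_le (div_pos (hb m) hK0) (hlow m)
  have hinv : Tendsto (fun m : ℕ => Real.log K / m) atTop (nhds 0) := by
    have : Tendsto (fun m : ℕ => ((m:ℝ))⁻¹) atTop (nhds 0) :=
      tendsto_inv_atTop_zero.comp tendsto_natCast_atTop_atTop
    simpa [div_eq_mul_inv] using this.const_mul (Real.log K)
  have hlower : Tendsto (fun m : ℕ => Real.log (b m) / m - Real.log K / m) atTop (nhds L) := by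
    simpa using h.sub hinv
  have hupper : Tendsto (fun m : ℕ => Real.log (b m) / m + Real.log K / m) atTop (nhds L) := by
    simpa using h.add hinv
  refine tendsto_of_tendsto_of_tendsto_of_le_of_le' hlower hupper ?_ ?_
  · filter_upwards [eventually_ge_atTop 1] with m hm
    have hmpos : (0:ℝ) ≤ m := Nat.cast_nonneg m
    rw [← sub_div]
    apply div_le_div_of_nonneg_right _ hmpos
    have h2 := Real.log_le_log (div_pos (hb m) hK0) (hlow m)
    rw [Real.log_div (hb m).ne' hK0.ne'] at h2
    linarith
  · filter_upwards [eventually_ge_atTop 1] with m hm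
    have hmpos : (0:ℝ) ≤ m := Nat.cast_nonneg m
    rw [← add_div]
    apply div_le_div_of_nonneg_right _ hmpos
    have h3 := Real.log_le_log (ha m) (hup m)
    rw [Real.log_mul hK0.ne' (hb m).ne'] at h3
    linarith

lemma Lpart1 {n : ℕ} (M : GL (Fin n) ℂ) (w : Fin n → ℂ) (hw : w ≠ 0) :
    ∃ lam ∈ spectrum ℂ ((M : Matrix (Fin n) (Fin n) ℂ)),
      Tendsto (fun m : ℕ =>
          Real.log ‖(((M : Matrix (Fin n) (Fin n) ℂ)) ^ m).mulVec w‖ / m)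
        atTop (nhds (Real.log (‖lam‖))) := by
  classical
  set A : Matrix (Fin n) (Fin n) ℂ := (M : Matrix (Fin n) (Fin n) ℂ) with hA
  set f : Module.End ℂ (Fin n → ℂ) := A.mulVecLin with hfdef
  have hfeq : f = Matrix.toLinAlgEquiv' A := by
    ext v
    simp [hfdef, Matrix.toLinAlgEquiv'_apply, Matrix.mulVecLin_apply]
  have hMu : IsUnit A := M.isUnit
  have hfu : IsUnit f := by
    rw [hfeq]
    exact hMu.map Matrix.toLinAlgEquiv'
  have hfpow : ∀ (m : ℕ) (v : Fin n → ℂ), (A ^ m).mulVec v = (f ^ m) v := by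
    intro m v
    rw [hfeq, ← map_pow, Matrix.toLinAlgEquiv'_apply]
  have hinj : ∀ (m : ℕ) (v : Fin n → ℂ), v ≠ 0 → (f ^ m) v ≠ 0 := by
    intro m v hv hz
    have hu : IsUnit (f ^ m) := hfu.pow m
    have hb := (Module.End.isUnit_iff (f ^ m)).mp hu
    exact hv (hb.injective (by simpa using hz))
  -- spectrum transfer
  have hspec : ∀ μ : ℂ, f.HasEigenvalue μ → μ ∈ spectrum ℂ A := by
    intro μ hμ
    have h1 : μ ∈ spectrum ℂ f := hμ.mem_spectrum
    rw [hfeq, AlgEquiv.spectrum_eq] at h1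
    exact h1
  -- decomposition of w
  have htop := Module.End.iSup_maxGenEigenspace_eq_top f
  have hwmem : w ∈ ⨆ μ : ℂ, f.maxGenEigenspace μ := by rw [htop]; trivial
  obtain ⟨d, hd, hsum⟩ := (Submodule.mem_iSup_iff_exists_finsupp _ _).mp hwmem
  set s : Finset ℂ := d.support with hsdef
  have hs : s.Nonempty := by
    rcases Finset.eq_empty_or_nonempty s with h | h
    · exfalso
      apply hw
      rw [← hsum, Finsupp.sum]
      rw [hsdef] at h
      simp [h]
    · exact h
  have hdnz : ∀ μ ∈ s, d μ ≠ 0 := fun μ hμ => Finsupp.mem_support_iff.mp hμ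
  have hkex : ∀ μ ∈ s, ∃ k : ℕ, ((f - μ • (1 : Module.End ℂ (Fin n → ℂ))) ^ k) (d μ) = 0 := by
    intro μ hμ
    have := hd μ
    rw [Module.End.mem_maxGenEigenspace] at this
    exact this
  have hspecs : ∀ μ ∈ s, μ ∈ spectrum ℂ A := by
    intro μ hμ
    obtain ⟨k, hk⟩ := hkex μ hμ
    apply hspec
    apply Module.End.hasEigenvalue_of_hasGenEigenvalue (k := k)
    rw [Module.End.hasGenEigenvalue_iff]
    intro hbot
    apply hdnz μ hμ
    have : d μ ∈ f.genEigenspace μ k :=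
      Module.End.mem_genEigenspace.mpr ⟨k, le_refl _, hk⟩
    rw [hbot] at this
    simpa using this
  have hμ0 : ∀ μ ∈ s, μ ≠ 0 := by
    intro μ hμ h0
    have := hspecs μ hμ
    rw [h0] at this
    exact spectrum.zero_notMem ℂ hMu this
  -- choose lam maximizing L
  set L : ℂ → ℝ := fun μ => Real.log ‖μ‖ with hL
  obtain ⟨lam, hlam_mem, hlamEq⟩ := Finset.exists_mem_eq_sup' hs L
  refine ⟨lam, hspecs lam hlam_mem, ?_⟩
  -- projection
  set E : Submodule ℂ (Fin n → ℂ) := f.maxGenEigenspace lam with hE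
  set F : Submodule ℂ (Fin n → ℂ) := ⨆ μ ≠ lam, f.maxGenEigenspace μ with hF
  have hdisj : Disjoint E F := (Module.End.independent_maxGenEigenspace f) lam
  have hcompl : IsCompl E F := by
    refine ⟨hdisj, codisjoint_iff.mpr ?_⟩
    rw [eq_top_iff, ← htop]
    refine iSup_le fun μ => ?_
    by_cases hμ : μ = lam
    · rw [hμ]; exact le_sup_left
    · exact le_trans (le_iSup₂ (f := fun μ (_ : μ ≠ lam) => f.maxGenEigenspace μ) μ hμ)
        le_sup_right
  set P : (Fin n → ℂ) →ₗ[ℂ] E := E.projectionOnto F hcompl with hP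
  set Pc : (Fin n → ℂ) →L[ℂ] (Fin n → ℂ) :=
    LinearMap.toContinuousLinearMap (E.subtype.comp P) with hPc
  set Kp : ℝ := max ‖Pc‖ 1 with hKp
  have hKp1 : (1:ℝ) ≤ Kp := le_max_right _ _
  have hKp0 : (0:ℝ) < Kp := lt_of_lt_of_le one_pos hKp1
  have hmaps : ∀ (μ : ℂ) (m : ℕ) (v : Fin n → ℂ), v ∈ f.maxGenEigenspace μ →
      (f ^ m) v ∈ f.maxGenEigenspace μ := by
    intro μ m v hv
    exact Module.End.mapsTo_genEigenspace_of_comm ((Commute.refl f).pow_right m) μ ⊤ hv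
  have hPleft : ∀ v : Fin n → ℂ, v ∈ E → Pc v = v := by
    intro v hv
    have h1 := Submodule.linearProjOfIsCompl_apply_left hcompl ⟨v, hv⟩
    have h2 : Pc v = ((P v : E) : Fin n → ℂ) := rfl
    rw [h2]
    rw [show P v = P ((⟨v, hv⟩ : E) : Fin n → ℂ) from rfl, h1]
  have hPright : ∀ v : Fin n → ℂ, v ∈ F → Pc v = 0 := by
    intro v hv
    have h1 := Submodule.linearProjOfIsCompl_apply_right hcompl ⟨v, hv⟩
    have h2 : Pc v = ((P v : E) : Fin n → ℂ) := rfl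
    rw [h2]
    rw [show P v = P ((⟨v, hv⟩ : F) : Fin n → ℂ) from rfl, h1]
    rfl
  have hdecomp : ∀ m : ℕ, (f ^ m) w = ∑ μ ∈ s, (f ^ m) (d μ) := by
    intro m
    rw [← hsum, Finsupp.sum]
    exact map_sum (f ^ m) _ _
  have hproj : ∀ m : ℕ, Pc ((f ^ m) w) = (f ^ m) (d lam) := by
    intro m
    rw [hdecomp m, map_sum, Finset.sum_eq_single lam]
    · exact hPleft _ (hmaps lam m (d lam) (hd lam))
    · intro μ hμs hμne
      apply hPright
      exact le_iSup₂ (f := fun μ (_ : μ ≠ lam) => f.maxGenEigenspace μ) μ hμne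
        (hmaps μ m (d μ) (hd μ))
    · intro hnot
      rw [Finsupp.notMem_support_iff.mp hnot]
      simp
  set a : ℕ → ℝ := fun m => ‖(f ^ m) w‖ with ha
  set b : ℂ → ℕ → ℝ := fun μ m => ‖(f ^ m) (d μ)‖ with hb
  have hbpos : ∀ μ ∈ s, ∀ m, 0 < b μ m := fun μ hμ m =>
    norm_pos_iff.mpr (hinj m (d μ) (hdnz μ hμ))
  have hapos : ∀ m, 0 < a m := fun m => norm_pos_iff.mpr (hinj m w hw)
  have h_each : ∀ μ ∈ s, Tendsto (fun m => Real.log (b μ m) / m) atTop (nhds (L μ)) := by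
    intro μ hμ
    obtain ⟨k, hk⟩ := hkex μ hμ
    exact Lcore f μ (hμ0 μ hμ) (d μ) (hdnz μ hμ) k hk
  have hble : ∀ m, b lam m ≤ Kp * a m := by
    intro m
    have h1 : b lam m = ‖Pc ((f ^ m) w)‖ := by rw [hproj m]
    rw [h1]
    calc ‖Pc ((f ^ m) w)‖ ≤ ‖Pc‖ * a m := Pc.le_opNorm _
      _ ≤ Kp * a m := mul_le_mul_of_nonneg_right (le_max_left _ _) (hapos m).le
  have hlow : Tendsto (fun m : ℕ => Real.log (b lam m) / m - Real.log Kp / m) atTop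
      (nhds (L lam)) := by
    have h0 := (h_each lam hlam_mem).sub (Ldiv (tendsto_const_nhds (x := Real.log Kp)))
    simpa using h0
  have hup : Tendsto (fun m : ℕ => Real.log s.card / m
      + s.sup' hs (fun μ => Real.log (b μ m) / m)) atTop (nhds (L lam)) := by
    have h1 := Ldiv (tendsto_const_nhds (x := Real.log s.card))
    have h2 := Lsup s hs (fun μ m => Real.log (b μ m) / m) L h_each
    have h3 := h1.add h2
    rw [zero_add, hlamEq] at h3
    exact h3
  have hgoal : (fun m : ℕ => Real.log ‖(A ^ m).mulVec w‖ / m)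
      = fun m : ℕ => Real.log (a m) / m := by
    funext m
    rw [hfpow]
  rw [hgoal]
  refine tendsto_of_tendsto_of_tendsto_of_le_of_le' hlow hup ?_ ?_
  · filter_upwards [eventually_ge_atTop 1] with m hm
    have h4 := Real.log_le_log (hbpos lam hlam_mem m) (hble m)
    rw [Real.log_mul hKp0.ne' (hapos m).ne'] at h4
    have hmn : (0:ℝ) ≤ m := Nat.cast_nonneg m
    rw [← sub_div]
    exact div_le_div_of_nonneg_right (by linarith) hmn
  · filter_upwards [eventually_ge_atTop 1] with m hm
    obtain ⟨μ0, hμ0s, hsup0⟩ := Finset.exists_mem_eq_sup' hs (fun μ => b μ m)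
    have hsum_le : a m ≤ (s.card : ℝ) * s.sup' hs (fun μ => b μ m) := by
      calc a m = ‖∑ μ ∈ s, (f ^ m) (d μ)‖ := congrArg norm (hdecomp m)
        _ ≤ ∑ μ ∈ s, b μ m := norm_sum_le _ _
        _ ≤ (s.card : ℝ) * s.sup' hs (fun μ => b μ m) := by
            rw [← nsmul_eq_mul]
            exact Finset.sum_le_card_nsmul s _ _
              (fun μ hμ => Finset.le_sup' (fun μ => b μ m) hμ)
    have hcardne : ((s.card : ℝ)) ≠ 0 := by
      have := Finset.Nonempty.card_pos hs
      exact_mod_cast this.ne'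
    have hlog : Real.log (a m) ≤ Real.log s.card + Real.log (b μ0 m) := by
      have h5 := Real.log_le_log (hapos m) hsum_le
      rw [hsup0] at h5
      rw [Real.log_mul hcardne (hbpos μ0 hμ0s m).ne'] at h5
      exact h5
    have hmn : (0:ℝ) ≤ m := Nat.cast_nonneg m
    calc Real.log (a m)/m ≤ (Real.log s.card + Real.log (b μ0 m))/m :=
          div_le_div_of_nonneg_right hlog hmn
      _ = Real.log s.card/m + Real.log (b μ0 m)/m := add_div _ _ _
      _ ≤ Real.log s.card/m + s.sup' hs (fun μ => Real.log (b μ m)/m) :=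
          add_le_add_right (Finset.le_sup' (fun μ => Real.log (b μ m)/m) hμ0s) _

lemma Lmulvec_ne {n : ℕ} (U : GL (Fin n) ℂ) (v : Fin n → ℂ) (hv : v ≠ 0) :
    ((U : Matrix (Fin n) (Fin n) ℂ)).mulVec v ≠ 0 := by
  intro h
  apply hv
  have h2 := congrArg (fun z => ((U⁻¹ : GL (Fin n) ℂ) : Matrix (Fin n) (Fin n) ℂ).mulVec z) h
  simp only [Matrix.mulVec_mulVec] at h2
  rw [show ((U⁻¹ : GL (Fin n) ℂ) : Matrix (Fin n) (Fin n) ℂ) * (U : Matrix (Fin n) (Fin n) ℂ)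
      = 1 from U.inv_mul] at h2
  rw [Matrix.one_mulVec] at h2
  simpa using h2

lemma Lbound {n : ℕ} (C : Subgroup (GL (Fin n) ℂ))
    (hC : IsCompact (C : Set (GL (Fin n) ℂ))) :
    ∃ K : ℝ, 1 ≤ K ∧ ∀ g ∈ C, ∀ v : Fin n → ℂ,
      ‖((g : GL (Fin n) ℂ) : Matrix (Fin n) (Fin n) ℂ).mulVec v‖ ≤ K * ‖v‖ := by
  classical
  set ψ : Matrix (Fin n) (Fin n) ℂ →ₗ[ℂ] ((Fin n → ℂ) →L[ℂ] (Fin n → ℂ)) :=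
    (LinearMap.toContinuousLinearMap :
      ((Fin n → ℂ) →ₗ[ℂ] (Fin n → ℂ)) ≃ₗ[ℂ] ((Fin n → ℂ) →L[ℂ] (Fin n → ℂ))).toLinearMap
      ∘ₗ (Matrix.toLin' :
        Matrix (Fin n) (Fin n) ℂ ≃ₗ[ℂ] ((Fin n → ℂ) →ₗ[ℂ] (Fin n → ℂ))).toLinearMap with hψ
  have hψc : Continuous ψ := ψ.continuous_of_finiteDimensional
  have hΦ : Continuous (fun g : GL (Fin n) ℂ => ‖ψ (g : Matrix (Fin n) (Fin n) ℂ)‖) :=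
    continuous_norm.comp (hψc.comp Units.continuous_val)
  obtain ⟨g0, hg0, hmax⟩ := hC.exists_isMaxOn ⟨1, C.one_mem⟩ hΦ.continuousOn
  set K : ℝ := max ‖ψ ((g0 : GL (Fin n) ℂ) : Matrix (Fin n) (Fin n) ℂ)‖ 1 with hK
  refine ⟨K, le_max_right _ _, ?_⟩
  intro g hg v
  have h1 : ((g : GL (Fin n) ℂ) : Matrix (Fin n) (Fin n) ℂ).mulVec v
      = ψ ((g : GL (Fin n) ℂ) : Matrix (Fin n) (Fin n) ℂ) v := by
    simp [hψ, Matrix.toLin'_apply]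
  rw [h1]
  calc ‖ψ ((g : GL (Fin n) ℂ) : Matrix (Fin n) (Fin n) ℂ) v‖
      ≤ ‖ψ ((g : GL (Fin n) ℂ) : Matrix (Fin n) (Fin n) ℂ)‖ * ‖v‖ :=
        ContinuousLinearMap.le_opNorm _ _
    _ ≤ K * ‖v‖ := by
        apply mul_le_mul_of_nonneg_right _ (norm_nonneg v)
        exact le_trans (hmax hg) (le_max_left _ _)


lemma Lpowvec {n : ℕ} (A : Matrix (Fin n) (Fin n) ℂ) (m : ℕ) (v : Fin n → ℂ) :
    (A ^ m).mulVec v = ((A.mulVecLin) ^ m) v := by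
  have h : A.mulVecLin = (Matrix.toLinAlgEquiv' A : Module.End ℂ (Fin n → ℂ)) := by
    ext u
    simp [Matrix.toLinAlgEquiv'_apply, Matrix.mulVecLin_apply]
  rw [h, ← map_pow, Matrix.toLinAlgEquiv'_apply]

lemma Lpart2 {n : ℕ} (M : GL (Fin n) ℂ) (lam : ℂ)
    (hlam : lam ∈ spectrum ℂ ((M : Matrix (Fin n) (Fin n) ℂ)))
    (w : Fin n → ℂ)
    (hw : w ∈ Module.End.maxGenEigenspace
        (Matrix.mulVecLin ((M : Matrix (Fin n) (Fin n) ℂ))) lam)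
    (hw0 : w ≠ 0) :
    Tendsto (fun m : ℕ => Real.log ‖(((M : Matrix (Fin n) (Fin n) ℂ)) ^ m).mulVec w‖ / m)
      atTop (nhds (Real.log (‖lam‖))) := by
  have hlam0 : lam ≠ 0 := by
    intro h
    rw [h] at hlam
    exact (Units.zero_notMem_spectrum (R := ℂ) M) hlam
  obtain ⟨k, hk⟩ := (Module.End.mem_maxGenEigenspace _ _ _).mp hw
  have h := Lcore (Matrix.mulVecLin ((M : Matrix (Fin n) (Fin n) ℂ))) lam hlam0 w hw0 k hk
  refine h.congr fun m => ?_
  rw [Lpowvec]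

end Aux

/-- Lyapunov spectrum of a cocycle of the form `u(m, x) = Mᵐ · c(m, x)` over a
measure-preserving `ℤ`-action, where `c` takes values in a compact subgroup of `GL(W)`
commuting with `M`: almost surely, for every nonzero `w` the exponent
`lim (1/m) log ‖u(m,x) w‖` exists and equals `log |λ|` for some eigenvalue `λ` of `M`;
and on (nonzero vectors of) each generalized eigenspace of `M` for the eigenvalue `λ`
the exponent is exactly `log |λ|`. -/
theorem stmt_17 {n : ℕ} {S : Type*} [MeasurableSpace S] (μ : Measure S)
    [IsProbabilityMeasure μ]
    (A : Equiv.Perm S) (hA : MeasurePreserving A μ μ)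
    (M : GL (Fin n) ℂ) (c : ℤ → S → GL (Fin n) ℂ)
    (C : Subgroup (GL (Fin n) ℂ))
    (hCcompact : IsCompact (C : Set (GL (Fin n) ℂ)))
    (hmem : ∀ m x, c m x ∈ C)
    (hcomm : ∀ g ∈ C, Commute g M)
    (hcoc : ∀ (m k : ℤ) (x : S), c (m + k) x = c m ((A ^ k) x) * c k x) :
    ∀ᵐ x ∂μ,
      (∀ w : Fin n → ℂ, w ≠ 0 →
        ∃ lam ∈ spectrum ℂ ((M : Matrix (Fin n) (Fin n) ℂ)),
          Tendsto
            (fun m : ℕ =>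
              Real.log ‖((M ^ (m : ℤ) * c (m : ℤ) x : GL (Fin n) ℂ) :
                  Matrix (Fin n) (Fin n) ℂ).mulVec w‖ / m)
            atTop (nhds (Real.log (‖lam‖)))) ∧
      (∀ lam ∈ spectrum ℂ ((M : Matrix (Fin n) (Fin n) ℂ)),
        ∀ w ∈ Module.End.maxGenEigenspace
            (Matrix.mulVecLin ((M : Matrix (Fin n) (Fin n) ℂ))) lam, w ≠ 0 →
          Tendsto
            (fun m : ℕ =>
              Real.log ‖((M ^ (m : ℤ) * c (m : ℤ) x : GL (Fin n) ℂ) :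
                  Matrix (Fin n) (Fin n) ℂ).mulVec w‖ / m)
            atTop (nhds (Real.log (‖lam‖)))) := by
  obtain ⟨K, hK1, hKb⟩ := Lbound C hCcompact
  have hK0 : (0:ℝ) < K := lt_of_lt_of_le one_pos hK1
  refine Filter.Eventually.of_forall (fun x => ?_)
  have key : ∀ w : Fin n → ℂ, w ≠ 0 → ∀ lam : ℂ,
      Tendsto (fun m : ℕ => Real.log ‖((M : Matrix (Fin n) (Fin n) ℂ) ^ m).mulVec w‖ / m)
        atTop (nhds (Real.log (‖lam‖))) →
      Tendsto (fun m : ℕ =>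
          Real.log ‖((M ^ (m : ℤ) * c (m : ℤ) x : GL (Fin n) ℂ) :
              Matrix (Fin n) (Fin n) ℂ).mulVec w‖ / m)
        atTop (nhds (Real.log (‖lam‖))) := by
    intro w hw lam hlim
    set a : ℕ → ℝ := fun m : ℕ => ‖((M ^ (m : ℤ) * c (m : ℤ) x : GL (Fin n) ℂ) :
        Matrix (Fin n) (Fin n) ℂ).mulVec w‖ with haa
    set b : ℕ → ℝ := fun m : ℕ => ‖((M : Matrix (Fin n) (Fin n) ℂ) ^ m).mulVec w‖ with hbb
    have hbpos : ∀ m, 0 < b m := by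
      intro m
      apply norm_pos_iff.mpr
      have h1 := Lmulvec_ne (M ^ m) w hw
      simpa [Units.val_pow_eq_pow_val] using h1
    have hval : ∀ m : ℕ,
        ((M ^ (m : ℤ) * c (m : ℤ) x : GL (Fin n) ℂ) : Matrix (Fin n) (Fin n) ℂ).mulVec w
        = ((c (m : ℤ) x : GL (Fin n) ℂ) : Matrix (Fin n) (Fin n) ℂ).mulVec
            (((M : Matrix (Fin n) (Fin n) ℂ) ^ m).mulVec w) := by
      intro m
      have hcm : Commute (c (m : ℤ) x) (M ^ (m : ℤ)) :=
        (hcomm _ (hmem _ x)).zpow_right (m : ℤ)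
      rw [← hcm.eq, Units.val_mul]
      have hzp : ((M ^ (m : ℤ) : GL (Fin n) ℂ) : Matrix (Fin n) (Fin n) ℂ)
          = ((M : Matrix (Fin n) (Fin n) ℂ)) ^ m := by
        rw [zpow_natCast, Units.val_pow_eq_pow_val]
      rw [hzp, ← Matrix.mulVec_mulVec]
    have hup : ∀ m, a m ≤ K * b m := by
      intro m
      have h1 : a m = ‖((c (m : ℤ) x : GL (Fin n) ℂ) : Matrix (Fin n) (Fin n) ℂ).mulVec
          (((M : Matrix (Fin n) (Fin n) ℂ) ^ m).mulVec w)‖ := congrArg norm (hval m)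
      rw [h1]
      exact hKb _ (hmem _ x) _
    have hlow : ∀ m, b m / K ≤ a m := by
      intro m
      have h3 : ((M : Matrix (Fin n) (Fin n) ℂ) ^ m).mulVec w
          = (((c (m : ℤ) x)⁻¹ : GL (Fin n) ℂ) : Matrix (Fin n) (Fin n) ℂ).mulVec
            (((c (m : ℤ) x : GL (Fin n) ℂ) : Matrix (Fin n) (Fin n) ℂ).mulVec
              (((M : Matrix (Fin n) (Fin n) ℂ) ^ m).mulVec w)) := by
        rw [Matrix.mulVec_mulVec,
          show (((c (m : ℤ) x)⁻¹ : GL (Fin n) ℂ) : Matrix (Fin n) (Fin n) ℂ)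
              * ((c (m : ℤ) x : GL (Fin n) ℂ) : Matrix (Fin n) (Fin n) ℂ) = 1
            from (c (m : ℤ) x).inv_mul, Matrix.one_mulVec]
      have h2 : b m ≤ K * a m := by
        calc b m = ‖(((c (m : ℤ) x)⁻¹ : GL (Fin n) ℂ) : Matrix (Fin n) (Fin n) ℂ).mulVec
              (((c (m : ℤ) x : GL (Fin n) ℂ) : Matrix (Fin n) (Fin n) ℂ).mulVec
                (((M : Matrix (Fin n) (Fin n) ℂ) ^ m).mulVec w))‖ := congrArg norm h3
          _ ≤ K * ‖((c (m : ℤ) x : GL (Fin n) ℂ) : Matrix (Fin n) (Fin n) ℂ).mulVec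
                (((M : Matrix (Fin n) (Fin n) ℂ) ^ m).mulVec w)‖ :=
              hKb _ (C.inv_mem (hmem _ x)) _
          _ = K * a m := by rw [← congrArg norm (hval m)]
      rw [mul_comm] at h2
      exact (div_le_iff₀ hK0).mpr h2
    exact Lcomp hK1 hbpos hlow hup hlim
  constructor
  · intro w hw
    obtain ⟨lam, hmem', hlim⟩ := Lpart1 M w hw
    exact ⟨lam, hmem', key w hw lam hlim⟩
  · intro lam hlam w hw hw0
    exact key w hw0 lam (Lpart2 M lam hlam w hw hw0)
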